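/- Let n ≥ 1 and let X be a 1×2n random matrix (a row vector) whose entries are independent standard complex Gaussian random variables. Then the inverse normalized second moment satisfies E[ |Haf(XᵀX)|² ]² / E[ |Haf(XᵀX)|⁴ ] = 4^{−n}. -/

import Mathlib

open scoped BigOperators
open MeasureTheory ProbabilityTheory Matrix

namespace GBS

/-- The distribution of a standard complex Gaussian random variable `Z = A + iB`, where `A, B`
are independent real Gaussians with mean `0` and variance `1/2` (so `E[Z] = 0`, `E[|Z|²] = 1`). -/
noncomputable def stdComplexGaussian : Measure ℂ :=
  Measure.map Complex.measurableEquivRealProd.symm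
    ((gaussianReal 0 (1 / 2)).prod (gaussianReal 0 (1 / 2)))

instance : IsProbabilityMeasure stdComplexGaussian :=
  Measure.isProbabilityMeasure_map Complex.measurableEquivRealProd.symm.measurable.aemeasurable

/-- The distribution of a `k × 2n` random matrix with i.i.d. standard complex Gaussian entries,
as a measure on `Fin k → Fin (2*n) → ℂ`. -/
noncomputable def gaussianMatrix (k n : ℕ) : Measure (Fin k → Fin (2 * n) → ℂ) :=
  Measure.pi fun _ => Measure.pi fun _ => stdComplexGaussian

/-- The 0-indexed version of the 1-indexed element `2j-1` of `{1,…,2n}`. -/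
def lo (n : ℕ) (j : Fin n) : Fin (2 * n) := ⟨2 * (j : ℕ), by omega⟩

/-- The 0-indexed version of the 1-indexed element `2j` of `{1,…,2n}`. -/
def hi (n : ℕ) (j : Fin n) : Fin (2 * n) := ⟨2 * (j : ℕ) + 1, by omega⟩

/-- The hafnian of a `2n × 2n` complex matrix:
`Haf(A) = (1/(2^n n!)) ∑_{σ ∈ S_{2n}} ∏_{j=1}^n A_{σ(2j−1), σ(2j)}`. -/
noncomputable def hafnian (n : ℕ) (A : Matrix (Fin (2 * n)) (Fin (2 * n)) ℂ) : ℂ :=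
  (1 / (2 ^ n * n.factorial : ℂ)) *
    ∑ σ : Equiv.Perm (Fin (2 * n)), ∏ j : Fin n, A (σ (lo n j)) (σ (hi n j))

/-! ### Auxiliary real Gaussian integrals -/

open Real Set Filter

lemma tendsto_pow_mul_exp (m : ℕ) :
    Tendsto (fun x : ℝ => x ^ m * Real.exp (-x ^ 2)) atTop (nhds 0) := by
  have h := rpow_mul_exp_neg_mul_sq_isLittleO_exp_neg (b := 1) one_pos (m : ℝ)
  have h2 : (fun x : ℝ => x ^ m * Real.exp (-x ^ 2)) =ᶠ[atTop]
      (fun x : ℝ => x ^ (m : ℝ) * Real.exp (-1 * x ^ 2)) := by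
    filter_upwards [eventually_gt_atTop 0] with x hx
    rw [Real.rpow_natCast, neg_one_mul]
  rw [Filter.tendsto_congr' h2]
  refine h.trans_tendsto ?_
  have h3 : Tendsto (fun x : ℝ => -(1/2 : ℝ) * x) atTop atBot :=
    Tendsto.neg_mul_atTop (by norm_num) tendsto_const_nhds tendsto_id
  exact Real.tendsto_exp_atBot.comp h3

lemma integrable_pow_mul_exp (m : ℕ) :
    Integrable (fun x : ℝ => x ^ m * Real.exp (-x ^ 2)) := by
  have := integrable_rpow_mul_exp_neg_mul_sq (b := 1) one_pos
    (s := (m : ℝ)) (by exact_mod_cast neg_one_lt_zero.trans_le (Nat.cast_nonneg m))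
  simpa [Real.rpow_natCast, neg_one_mul] using this

lemma step (m : ℕ) :
    ∫ x in Ioi (0:ℝ), x ^ (m+2) * Real.exp (-x ^ 2)
      = (((m:ℝ)+1)/2) * ∫ x in Ioi (0:ℝ), x ^ m * Real.exp (-x ^ 2) := by
  have key : ∫ x in Ioi (0:ℝ),
      (-(((m:ℝ)+1)/2) * (x ^ m * Real.exp (-x ^ 2)) + x ^ (m+2) * Real.exp (-x ^ 2)) = 0 := by
    have := integral_Ioi_of_hasDerivAt_of_tendsto
      (f := fun x : ℝ => -(((1:ℝ)/2) * (x ^ (m+1) * Real.exp (-x ^ 2))))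
      (f' := fun x : ℝ => -(((m:ℝ)+1)/2) * (x ^ m * Real.exp (-x ^ 2))
        + x ^ (m+2) * Real.exp (-x ^ 2)) (a := 0) (m := 0)
      ?_ ?_ ?_ ?_
    · simpa using this
    · apply Continuous.continuousWithinAt
      continuity
    · intro x hx
      have h1 : HasDerivAt (fun x : ℝ => x ^ (m+1)) (((m:ℝ)+1) * x ^ m) x := by
        simpa using hasDerivAt_pow (m+1) x
      have h2 : HasDerivAt (fun x : ℝ => Real.exp (-x ^ 2)) (Real.exp (-x^2) * (-(2*x))) x := by
        have := ((hasDerivAt_pow 2 x).neg).exp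
        simpa [mul_comm] using this
      have := ((h1.mul h2).const_mul ((1:ℝ)/2)).neg
      convert this using 1
      · funext y; rfl
      push_cast
      ring
    · apply Integrable.integrableOn
      exact (((integrable_pow_mul_exp m).const_mul _)).add (integrable_pow_mul_exp (m+2))
    · have := ((tendsto_pow_mul_exp (m+1)).const_mul ((1:ℝ)/2)).neg
      simpa using this
  have hadd : ∫ x in Ioi (0:ℝ),
      (-(((m:ℝ)+1)/2) * (x ^ m * Real.exp (-x ^ 2)) + x ^ (m+2) * Real.exp (-x ^ 2))
      = -(((m:ℝ)+1)/2) * (∫ x in Ioi (0:ℝ), x ^ m * Real.exp (-x ^ 2))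
        + ∫ x in Ioi (0:ℝ), x ^ (m+2) * Real.exp (-x ^ 2) := by
    rw [integral_add (((integrable_pow_mul_exp m).integrableOn).const_mul _)
      ((integrable_pow_mul_exp (m+2)).integrableOn), integral_const_mul]
  rw [hadd] at key
  linarith [key]

lemma J0 : ∫ x in Ioi (0:ℝ), Real.exp (-x ^ 2) = Real.sqrt π / 2 := by
  have := integral_gaussian_Ioi 1
  simpa [neg_one_mul] using this

lemma J2 : ∫ x in Ioi (0:ℝ), x ^ 2 * Real.exp (-x ^ 2) = Real.sqrt π / 4 := by
  have h := step 0
  simp only [pow_zero, one_mul, Nat.cast_zero] at h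
  rw [h, J0]
  ring

lemma J4 : ∫ x in Ioi (0:ℝ), x ^ 4 * Real.exp (-x ^ 2) = 3 * Real.sqrt π / 8 := by
  have h := step 2
  norm_num at h
  rw [h, J2]
  ring

lemma K2 : ∫ x : ℝ, x ^ 2 * Real.exp (-x ^ 2) = Real.sqrt π / 2 := by
  have h : (fun x : ℝ => x ^ 2 * Real.exp (-x ^ 2))
      = fun x : ℝ => |x| ^ 2 * Real.exp (-|x| ^ 2) := by
    ext x; rw [sq_abs]
  rw [h, integral_comp_abs (f := fun x => x ^ 2 * Real.exp (-x ^ 2)), J2]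
  ring

lemma K4 : ∫ x : ℝ, x ^ 4 * Real.exp (-x ^ 2) = 3 * Real.sqrt π / 4 := by
  have h : (fun x : ℝ => x ^ 4 * Real.exp (-x ^ 2))
      = fun x : ℝ => |x| ^ 4 * Real.exp (-|x| ^ 2) := by
    ext x
    have h4 : |x| ^ 4 = x ^ 4 := by
      rw [show 4 = 2 * 2 by norm_num, pow_mul, pow_mul, sq_abs]
    rw [h4, sq_abs]
  rw [h, integral_comp_abs (f := fun x => x ^ 4 * Real.exp (-x ^ 2)), J4]
  ring

/-! ### Moments of `gaussianReal 0 (1/2)` -/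

lemma pdf_half (x : ℝ) : gaussianPDFReal 0 (1/2) x = (Real.sqrt π)⁻¹ * Real.exp (-x^2) := by
  rw [gaussianPDFReal]
  norm_num
  rw [mul_comm ((Real.sqrt π)⁻¹), ← mul_assoc, mul_inv_cancel₀ (by positivity), one_mul]

lemma transfer (g : ℝ → ℝ) :
    ∫ x, g x ∂(gaussianReal 0 (1/2)) = ∫ x, ((Real.sqrt π)⁻¹ * Real.exp (-x^2)) * g x := by
  rw [gaussianReal_of_var_ne_zero 0 (by norm_num : (1/2 : NNReal) ≠ 0)]
  rw [show gaussianPDF 0 (1/2)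
    = fun x => ((Real.toNNReal (gaussianPDFReal 0 (1/2) x) : ENNReal)) from rfl]
  rw [integral_withDensity_eq_integral_smul ((measurable_gaussianPDFReal 0 (1/2)).real_toNNReal) g]
  congr 1
  ext x
  rw [NNReal.smul_def, smul_eq_mul, Real.coe_toNNReal _ (gaussianPDFReal_nonneg _ _ _), pdf_half]

lemma transferInt (g : ℝ → ℝ) :
    Integrable g (gaussianReal 0 (1/2)) ↔
      Integrable (fun x => ((Real.sqrt π)⁻¹ * Real.exp (-x^2)) * g x) := by
  rw [gaussianReal_of_var_ne_zero 0 (by norm_num : (1/2 : NNReal) ≠ 0)]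
  rw [show gaussianPDF 0 (1/2)
    = fun x => ((Real.toNNReal (gaussianPDFReal 0 (1/2) x) : ENNReal)) from rfl]
  rw [integrable_withDensity_iff_integrable_smul
    ((measurable_gaussianPDFReal 0 (1/2)).real_toNNReal)]
  apply integrable_congr
  apply Filter.Eventually.of_forall
  intro x
  simp only [NNReal.smul_def, smul_eq_mul]
  rw [Real.coe_toNNReal _ (gaussianPDFReal_nonneg _ _ _), pdf_half]

lemma sqrt_pi_ne : Real.sqrt π ≠ 0 := by positivity

lemma I2 : Integrable (fun x : ℝ => x ^ 2) (gaussianReal 0 (1/2)) := by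
  rw [transferInt]
  refine ((integrable_pow_mul_exp 2).const_mul ((Real.sqrt π)⁻¹)).congr ?_
  apply Filter.Eventually.of_forall
  intro x; ring

lemma I4 : Integrable (fun x : ℝ => x ^ 4) (gaussianReal 0 (1/2)) := by
  rw [transferInt]
  refine ((integrable_pow_mul_exp 4).const_mul ((Real.sqrt π)⁻¹)).congr ?_
  apply Filter.Eventually.of_forall
  intro x; ring

lemma M2 : ∫ x, x ^ 2 ∂(gaussianReal 0 (1/2)) = 1/2 := by
  rw [transfer (fun x => x ^ 2)]
  rw [show (fun x : ℝ => ((Real.sqrt π)⁻¹ * Real.exp (-x^2)) * x ^ 2)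
    = fun x : ℝ => (Real.sqrt π)⁻¹ * (x ^ 2 * Real.exp (-x^2)) from funext fun x => by ring]
  rw [integral_const_mul, K2]
  field_simp

lemma M4 : ∫ x, x ^ 4 ∂(gaussianReal 0 (1/2)) = 3/4 := by
  rw [transfer (fun x => x ^ 4)]
  rw [show (fun x : ℝ => ((Real.sqrt π)⁻¹ * Real.exp (-x^2)) * x ^ 4)
    = fun x : ℝ => (Real.sqrt π)⁻¹ * (x ^ 4 * Real.exp (-x^2)) from funext fun x => by ring]
  rw [integral_const_mul, K4]
  field_simp

/-! ### Moments of the standard complex Gaussian -/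

lemma abs_symm_sq (p : ℝ × ℝ) :
    ‖Complex.measurableEquivRealProd.symm p‖ ^ 2 = p.1 ^ 2 + p.2 ^ 2 := by
  rw [Complex.sq_norm]
  show Complex.normSq ⟨p.1, p.2⟩ = _
  rw [Complex.normSq_mk]
  ring

lemma m2_eq : ∫ z, ‖z‖ ^ 2 ∂stdComplexGaussian = 1 := by
  rw [stdComplexGaussian, integral_map_equiv]
  simp only [abs_symm_sq]
  have hI : Integrable (fun x : ℝ => (1:ℝ)) (gaussianReal 0 (1/2)) := integrable_const 1
  rw [show (fun p : ℝ × ℝ => p.1 ^ 2 + p.2 ^ 2)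
    = fun p : ℝ × ℝ => p.1 ^ 2 * 1 + 1 * p.2 ^ 2 from funext fun p => by ring]
  have e1 : ∫ p : ℝ × ℝ, p.1 ^ 2 * 1 ∂((gaussianReal 0 (1/2)).prod (gaussianReal 0 (1/2)))
      = (∫ x, x ^ 2 ∂(gaussianReal 0 (1/2))) * ∫ _, (1:ℝ) ∂(gaussianReal 0 (1/2)) :=
    integral_prod_mul (fun x : ℝ => x ^ 2) (fun _ : ℝ => (1:ℝ))
  have e2 : ∫ p : ℝ × ℝ, 1 * p.2 ^ 2 ∂((gaussianReal 0 (1/2)).prod (gaussianReal 0 (1/2)))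
      = (∫ _, (1:ℝ) ∂(gaussianReal 0 (1/2))) * ∫ x, x ^ 2 ∂(gaussianReal 0 (1/2)) :=
    integral_prod_mul (fun _ : ℝ => (1:ℝ)) (fun x : ℝ => x ^ 2)
  rw [integral_add (I2.mul_prod hI) (hI.mul_prod I2), e1, e2, M2]
  simp
  norm_num

lemma m4_eq : ∫ z, ‖z‖ ^ 4 ∂stdComplexGaussian = 2 := by
  rw [stdComplexGaussian, integral_map_equiv]
  have habs : ∀ p : ℝ × ℝ,
      ‖Complex.measurableEquivRealProd.symm p‖ ^ 4 = (p.1 ^ 2 + p.2 ^ 2) ^ 2 := by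
    intro p
    rw [show 4 = 2 * 2 by norm_num, pow_mul, abs_symm_sq]
  simp only [habs]
  have hI : Integrable (fun x : ℝ => (1:ℝ)) (gaussianReal 0 (1/2)) := integrable_const 1
  rw [show (fun p : ℝ × ℝ => (p.1 ^ 2 + p.2 ^ 2) ^ 2)
    = fun p : ℝ × ℝ => p.1 ^ 4 * 1 + (2 * (p.1 ^ 2 * p.2 ^ 2) + 1 * p.2 ^ 4) from
    funext fun p => by ring]
  have e1 : ∫ p : ℝ × ℝ, p.1 ^ 4 * 1 ∂((gaussianReal 0 (1/2)).prod (gaussianReal 0 (1/2)))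
      = (∫ x, x ^ 4 ∂(gaussianReal 0 (1/2))) * ∫ _, (1:ℝ) ∂(gaussianReal 0 (1/2)) :=
    integral_prod_mul (fun x : ℝ => x ^ 4) (fun _ : ℝ => (1:ℝ))
  have e2 : ∫ p : ℝ × ℝ, p.1 ^ 2 * p.2 ^ 2 ∂((gaussianReal 0 (1/2)).prod (gaussianReal 0 (1/2)))
      = (∫ x, x ^ 2 ∂(gaussianReal 0 (1/2))) * ∫ x, x ^ 2 ∂(gaussianReal 0 (1/2)) :=
    integral_prod_mul (fun x : ℝ => x ^ 2) (fun x : ℝ => x ^ 2)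
  have e3 : ∫ p : ℝ × ℝ, 1 * p.2 ^ 4 ∂((gaussianReal 0 (1/2)).prod (gaussianReal 0 (1/2)))
      = (∫ _, (1:ℝ) ∂(gaussianReal 0 (1/2))) * ∫ x, x ^ 4 ∂(gaussianReal 0 (1/2)) :=
    integral_prod_mul (fun _ : ℝ => (1:ℝ)) (fun x : ℝ => x ^ 4)
  have hadd2 : ∫ p : ℝ × ℝ, (2 * (p.1 ^ 2 * p.2 ^ 2) + 1 * p.2 ^ 4)
        ∂((gaussianReal 0 (1/2)).prod (gaussianReal 0 (1/2)))
      = (∫ p : ℝ × ℝ, 2 * (p.1 ^ 2 * p.2 ^ 2)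
          ∂((gaussianReal 0 (1/2)).prod (gaussianReal 0 (1/2))))
        + ∫ p : ℝ × ℝ, 1 * p.2 ^ 4 ∂((gaussianReal 0 (1/2)).prod (gaussianReal 0 (1/2))) :=
    integral_add ((I2.mul_prod I2).const_mul 2) (hI.mul_prod I4)
  have haddO : ∫ p : ℝ × ℝ, (p.1 ^ 4 * 1 + (2 * (p.1 ^ 2 * p.2 ^ 2) + 1 * p.2 ^ 4))
        ∂((gaussianReal 0 (1/2)).prod (gaussianReal 0 (1/2)))
      = (∫ p : ℝ × ℝ, p.1 ^ 4 * 1 ∂((gaussianReal 0 (1/2)).prod (gaussianReal 0 (1/2))))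
        + ∫ p : ℝ × ℝ, (2 * (p.1 ^ 2 * p.2 ^ 2) + 1 * p.2 ^ 4)
            ∂((gaussianReal 0 (1/2)).prod (gaussianReal 0 (1/2))) :=
    integral_add (I4.mul_prod hI) (((I2.mul_prod I2).const_mul 2).add (hI.mul_prod I4))
  rw [haddO, hadd2, e1, e3, integral_const_mul, e2, M2, M4]
  simp
  norm_num

/-! ### Hafnian of a rank-one product -/

lemma prod_pair (n : ℕ) (g : Fin (2*n) → ℂ) :
    ∏ j : Fin n, (g (lo n j) * g (hi n j)) = ∏ i, g i := by
  induction n with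
  | zero => simp [Finset.univ_eq_empty]
  | succ n ih =>
    rw [Fin.prod_univ_castSucc (f := fun j => g (lo (n+1) j) * g (hi (n+1) j))]
    have h2 : ∏ i : Fin (2*(n+1)), g i
        = ((∏ i : Fin (2*n), g (i.castSucc.castSucc)) * g ((Fin.last (2*n)).castSucc))
            * g (Fin.last (2*n+1)) := by
      rw [show (∏ i : Fin (2*(n+1)), g i)
          = (∏ i : Fin (2*n+1), g i.castSucc) * g (Fin.last (2*n+1)) from
          Fin.prod_univ_castSucc (n := 2*n+1) (f := g),
        Fin.prod_univ_castSucc (n := 2*n) (f := fun i : Fin (2*n+1) => g i.castSucc)]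
    rw [h2, ← ih (fun i => g (i.castSucc.castSucc))]
    have hlo : ∀ j : Fin n, lo (n+1) j.castSucc = ((lo n j).castSucc).castSucc := by
      intro j; ext; simp [lo, Fin.castSucc, Fin.castAdd, Fin.castLE]
    have hhi : ∀ j : Fin n, hi (n+1) j.castSucc = ((hi n j).castSucc).castSucc := by
      intro j; ext; simp [hi, Fin.castSucc, Fin.castAdd, Fin.castLE]
    have hl : lo (n+1) (Fin.last n) = (Fin.last (2*n)).castSucc := by
      ext; simp [lo]
    have hh : hi (n+1) (Fin.last n) = Fin.last (2*n+1) := by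
      ext; simp [hi]
    rw [hl, hh]
    rw [Finset.prod_congr rfl (fun j _ => by rw [hlo j, hhi j])]
    ring

lemma haf_eq (n : ℕ) (X : Fin 1 → Fin (2*n) → ℂ) :
    hafnian n ((Matrix.of X)ᵀ * Matrix.of X)
      = (((2*n).factorial : ℂ) / (2 ^ n * n.factorial)) * ∏ i, X 0 i := by
  have hA : ∀ i j, ((Matrix.of X)ᵀ * Matrix.of X) i j = X 0 i * X 0 j := by
    intro i j
    rw [Matrix.mul_apply, Fin.sum_univ_one]
    rfl
  unfold hafnian
  have hterm : ∀ σ : Equiv.Perm (Fin (2*n)),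
      ∏ j : Fin n, ((Matrix.of X)ᵀ * Matrix.of X) (σ (lo n j)) (σ (hi n j)) = ∏ i, X 0 i := by
    intro σ
    calc ∏ j : Fin n, ((Matrix.of X)ᵀ * Matrix.of X) (σ (lo n j)) (σ (hi n j))
        = ∏ j : Fin n, (X 0 (σ (lo n j)) * X 0 (σ (hi n j))) := by
          exact Finset.prod_congr rfl (fun j _ => hA _ _)
      _ = ∏ i, X 0 (σ i) := prod_pair n (fun i => X 0 (σ i))
      _ = ∏ i, X 0 i := Equiv.prod_comp σ _
  rw [Finset.sum_congr rfl (fun σ _ => hterm σ), Finset.sum_const, Finset.card_univ,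
    Fintype.card_perm, Fintype.card_fin]
  simp only [nsmul_eq_mul]
  ring

/-! ### Main theorem -/

/-- For `n ≥ 1` and `X` a `1 × 2n` row vector of i.i.d. standard complex
Gaussians, `E[|Haf(XᵀX)|²]² / E[|Haf(XᵀX)|⁴] = 4^{−n}`. -/
theorem inverse_normalized_second_moment_one_row (n : ℕ) (hn : 1 ≤ n) :
    (∫ X, ‖hafnian n ((Matrix.of X)ᵀ * Matrix.of X)‖ ^ 2 ∂gaussianMatrix 1 n) ^ 2 /
        (∫ X, ‖hafnian n ((Matrix.of X)ᵀ * Matrix.of X)‖ ^ 4 ∂gaussianMatrix 1 n) =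
      ((4 : ℝ) ^ n)⁻¹ := by
  letI : MeasureSpace ℂ := ⟨stdComplexGaussian⟩
  haveI : SigmaFinite (volume : Measure ℂ) := inferInstanceAs (SigmaFinite stdComplexGaussian)
  have hvol : gaussianMatrix 1 n = (volume : Measure (Fin 1 → Fin (2*n) → ℂ)) := rfl
  -- factorization of a product integrand over the i.i.d. matrix entries
  have main : ∀ h : ℂ → ℝ,
      (∫ X : Fin 1 → Fin (2*n) → ℂ, ∏ i, h (X 0 i) ∂gaussianMatrix 1 n)
        = (∫ z, h z ∂stdComplexGaussian) ^ (2*n) := by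
    intro h
    rw [gaussianMatrix]
    have hfun : (fun X : Fin 1 → Fin (2*n) → ℂ => ∏ i, h (X 0 i))
        = fun X => ∏ k : Fin 1, (fun y : Fin (2*n) → ℂ => ∏ i, h (y i)) (X k) := by
      funext X
      rw [Fin.prod_univ_one]
    rw [hfun,
      MeasureTheory.integral_fintype_prod_eq_pow
        (f := fun y : Fin (2*n) → ℂ => ∏ i, h (y i)),
      MeasureTheory.integral_fintype_prod_eq_pow h]
    simp only [Fintype.card_fin, pow_one]
  set c : ℂ := (((2*n).factorial : ℂ) / (2 ^ n * n.factorial)) with hc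
  have hcne : c ≠ 0 := by
    rw [hc]
    apply div_ne_zero
    · exact_mod_cast Nat.factorial_ne_zero (2*n)
    · apply mul_ne_zero
      · exact pow_ne_zero _ two_ne_zero
      · exact_mod_cast Nat.factorial_ne_zero n
  set r : ℝ := ‖c‖ with hr
  have hrne : r ≠ 0 := by
    rw [hr]
    simpa using hcne
  have habs : ∀ (X : Fin 1 → Fin (2*n) → ℂ) (k : ℕ),
      ‖hafnian n ((Matrix.of X)ᵀ * Matrix.of X)‖ ^ k
        = r ^ k * ∏ i, ‖X 0 i‖ ^ k := by
    intro X k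
    rw [haf_eq, ← hc, norm_mul, norm_prod, mul_pow, ← Finset.prod_pow, ← hr]
  have hint2 : (∫ X, ‖hafnian n ((Matrix.of X)ᵀ * Matrix.of X)‖ ^ 2
      ∂gaussianMatrix 1 n) = r ^ 2 := by
    simp only [habs]
    rw [MeasureTheory.integral_const_mul, main (fun z => ‖z‖ ^ 2), m2_eq]
    simp
  have hint4 : (∫ X, ‖hafnian n ((Matrix.of X)ᵀ * Matrix.of X)‖ ^ 4
      ∂gaussianMatrix 1 n) = r ^ 4 * 2 ^ (2*n) := by
    simp only [habs]
    rw [MeasureTheory.integral_const_mul, main (fun z => ‖z‖ ^ 4), m4_eq]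
  rw [hint2, hint4]
  rw [show ((2:ℝ)) ^ (2*n) = 4 ^ n by rw [pow_mul]; norm_num]
  field_simp
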